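/- Let d ≥ 1 and let ξ ∈ ℝ^{ℕ^n_{2d}} with Euclidean norm ‖ξ‖ ≤ 1/2. Then the polynomial c(x) := ‖[x]_d‖² + ξ^T[x]_{2d} satisfies c(x) ≥ (1 + ‖x‖²)/2 for all x ∈ ℝ^n; in particular c is coercive, i.e., every sublevel set {x ∈ ℝ^n : c(x) ≤ M} is bounded. Consequently, if K ⊆ ℝ^n is a nonempty closed set, then c attains its minimum over K. -/

import Mathlib

open MvPolynomial Finsupp

noncomputable section

/-- The total degree `|α|` of a multi-index `α ∈ ℕ^n`. -/
def mdeg {n : ℕ} (α : Fin n →₀ ℕ) : ℕ := ∑ i, α i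

/-- `⌈m/2⌉` for a natural number `m`. -/
def halfCeil (m : ℕ) : ℕ := (m + 1) / 2

/-- The Riesz functional `R_y(f) = ∑_γ f_γ y_γ`. -/
def Riesz {n : ℕ} (y : (Fin n →₀ ℕ) → ℝ) (f : MvPolynomial (Fin n) ℝ) : ℝ :=
  ∑ γ ∈ f.support, f.coeff γ * y γ

/-- The `k`-th localizing matrix `L_f^{(k)}[y]`, indexed by multi-indices; its
`(α,β)` entry is `∑_γ f_γ y_{α+β+γ}` when `|α|,|β| ≤ s := k - ⌈deg f / 2⌉` (and `0` otherwise). -/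
def locMat {n : ℕ} (k : ℕ) (f : MvPolynomial (Fin n) ℝ) (y : (Fin n →₀ ℕ) → ℝ) :
    Matrix (Fin n →₀ ℕ) (Fin n →₀ ℕ) ℝ := fun α β =>
  if mdeg α ≤ k - halfCeil f.totalDegree ∧ mdeg β ≤ k - halfCeil f.totalDegree then
    ∑ γ ∈ f.support, f.coeff γ * y (α + β + γ)
  else 0

/-- Positive semidefiniteness of a (block-finitely supported) matrix indexed by multi-indices:
symmetry together with nonnegativity of the quadratic form on all finitely supported vectors. -/
def IsPSD {n : ℕ} (M : Matrix (Fin n →₀ ℕ) (Fin n →₀ ℕ) ℝ) : Prop :=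
  (∀ α β, M α β = M β α) ∧
  ∀ v : (Fin n →₀ ℕ) →₀ ℝ, 0 ≤ ∑ α ∈ v.support, ∑ β ∈ v.support, v α * M α β * v β

/-- The evaluation `u^α` of a monomial with multi-index `α` at a point `u`. -/
def monoEval {n : ℕ} (u : Fin n → ℝ) (α : Fin n →₀ ℕ) : ℝ := ∏ i, u i ^ α i

/-- The finite set of multi-indices `α ∈ ℕ^n` with `|α| ≤ D`. -/
def degLE (n D : ℕ) : Finset (Fin n →₀ ℕ) :=
  (Finset.Iic (Finsupp.equivFunOnFinite.symm fun _ : Fin n => D)).filter fun α => mdeg α ≤ D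

end

lemma mem_degLE {n D : ℕ} (α : Fin n →₀ ℕ) : α ∈ degLE n D ↔ mdeg α ≤ D := by
  simp only [degLE, Finset.mem_filter, Finset.mem_Iic, and_iff_right_iff_imp]
  intro h
  rw [Finsupp.le_def]
  intro i
  simp only [Finsupp.coe_equivFunOnFinite_symm]
  exact le_trans (Finset.single_le_sum (f := fun j => α j) (fun _ _ => Nat.zero_le _) (Finset.mem_univ i)) h

lemma mdeg_add {n : ℕ} (α β : Fin n →₀ ℕ) : mdeg (α + β) = mdeg α + mdeg β := by
  simp [mdeg, Finset.sum_add_distrib]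

lemma exists_le_mdeg {n : ℕ} (α : Fin n →₀ ℕ) : ∀ m ≤ mdeg α, ∃ β ≤ α, mdeg β = m := by
  intro m
  induction m with
  | zero => intro _; exact ⟨0, (zero_le : (0 : Fin n →₀ ℕ) ≤ α), by simp [mdeg]⟩
  | succ m ih =>
      intro hm
      obtain ⟨β, hβle, hβm⟩ := ih (Nat.le_of_succ_le hm)
      have : ∃ i, β i < α i := by
        by_contra h
        push_neg at h
        have : mdeg α ≤ mdeg β := Finset.sum_le_sum (fun i _ => h i)
        omega
      obtain ⟨i, hi⟩ := this
      refine ⟨β + Finsupp.single i 1, ?_, ?_⟩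
      · rw [Finsupp.le_def]
        intro j
        rcases eq_or_ne j i with rfl | hne
        · simp; omega
        · simpa [Finsupp.single_apply, hne.symm] using (Finsupp.le_def.mp hβle j)
      · rw [mdeg_add, hβm]
        simp [mdeg, Finsupp.single_apply]


lemma exists_split {n d : ℕ} (α : Fin n →₀ ℕ) (h : mdeg α ≤ 2 * d) :
    ∃ p : (Fin n →₀ ℕ) × (Fin n →₀ ℕ), p.1 + p.2 = α ∧ mdeg p.1 ≤ d ∧ mdeg p.2 ≤ d := by
  rcases le_or_gt (mdeg α) d with h' | h'
  · exact ⟨(0, α), by simp, by simp [mdeg], h'⟩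
  · obtain ⟨β, hβle, hβm⟩ := exists_le_mdeg α (mdeg α - d) (by omega)
    have hsum : mdeg β + mdeg (α - β) = mdeg α := by
      rw [← mdeg_add, add_tsub_cancel_of_le hβle]
    exact ⟨(β, α - β), add_tsub_cancel_of_le hβle, by simp only; omega, by simp only; omega⟩

lemma monoEval_add {n : ℕ} (x : Fin n → ℝ) (α β : Fin n →₀ ℕ) :
    monoEval x (α + β) = monoEval x α * monoEval x β := by
  simp [monoEval, pow_add, Finset.prod_mul_distrib]

lemma Q_le_S_sq {n d : ℕ} (x : Fin n → ℝ) :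
    ∑ α ∈ degLE n (2 * d), monoEval x α ^ 2 ≤ (∑ β ∈ degLE n d, monoEval x β ^ 2) ^ 2 := by
  classical
  have key : ∀ α ∈ degLE n (2 * d), ∃ p ∈ degLE n d ×ˢ degLE n d, p.1 + p.2 = α := by
    intro α hα
    obtain ⟨p, hp, h1, h2⟩ := exists_split α ((mem_degLE α).mp hα)
    exact ⟨p, Finset.mem_product.mpr ⟨(mem_degLE _).mpr h1, (mem_degLE _).mpr h2⟩, hp⟩
  choose e he hesum using key
  calc ∑ α ∈ degLE n (2 * d), monoEval x α ^ 2
      = ∑ p ∈ (degLE n (2*d)).attach.image (fun a => e a.1 a.2),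
          (monoEval x p.1 * monoEval x p.2) ^ 2 := by
        rw [Finset.sum_image (by
          intro a _ b _ h
          exact Subtype.ext (by have h' : e a.1 a.2 = e b.1 b.2 := h; rw [← hesum a.1 a.2, ← hesum b.1 b.2, h']))]
        rw [Finset.sum_attach (degLE n (2*d)) (fun α => monoEval x α ^ 2) |>.symm]
        refine Finset.sum_congr rfl fun a _ => ?_
        rw [← monoEval_add, hesum a.1 a.2]
    _ ≤ ∑ p ∈ degLE n d ×ˢ degLE n d, (monoEval x p.1 * monoEval x p.2) ^ 2 := by
        refine Finset.sum_le_sum_of_subset_of_nonneg ?_ (fun _ _ _ => sq_nonneg _)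
        intro p hp
        simp only [Finset.mem_image, Finset.mem_attach, true_and] at hp
        obtain ⟨a, rfl⟩ := hp
        exact he a.1 a.2
    _ = (∑ β ∈ degLE n d, monoEval x β ^ 2) ^ 2 := by
        rw [sq, Finset.sum_mul_sum]
        simp [Finset.sum_product, mul_pow]

lemma monoEval_zero {n : ℕ} (x : Fin n → ℝ) : monoEval x 0 = 1 := by simp [monoEval]

lemma monoEval_single {n : ℕ} (x : Fin n → ℝ) (i : Fin n) :
    monoEval x (Finsupp.single i 1) = x i := by
  rw [monoEval, Finset.prod_eq_single i]
  · simp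
  · intro j _ hj; simp [Finsupp.single_apply, (Ne.symm hj)]
  · simp

lemma S_ge {n d : ℕ} (hd : 1 ≤ d) (x : Fin n → ℝ) :
    1 + ∑ i, x i ^ 2 ≤ ∑ β ∈ degLE n d, monoEval x β ^ 2 := by
  classical
  have hsub : insert (0 : Fin n →₀ ℕ) (Finset.univ.image fun i => Finsupp.single i 1)
      ⊆ degLE n d := by
    intro β hβ
    rw [mem_degLE]
    rcases Finset.mem_insert.mp hβ with rfl | h
    · simp [mdeg]
    · obtain ⟨i, _, rfl⟩ := Finset.mem_image.mp h
      simpa [mdeg, Finsupp.single_apply] using hd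
  calc 1 + ∑ i, x i ^ 2
      = ∑ β ∈ insert (0 : Fin n →₀ ℕ) (Finset.univ.image fun i => Finsupp.single i 1),
          monoEval x β ^ 2 := by
        rw [Finset.sum_insert (by
          simp only [Finset.mem_image, Finset.mem_univ, true_and]
          rintro ⟨i, hi⟩
          exact one_ne_zero (Finsupp.single_eq_zero.mp hi))]
        rw [Finset.sum_image (fun i _ j _ h =>
          (Finsupp.single_left_injective one_ne_zero) h)]
        simp [monoEval_zero, monoEval_single]
    _ ≤ _ := Finset.sum_le_sum_of_subset_of_nonneg hsub (fun _ _ _ => sq_nonneg _)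


/-- For `d ≥ 1` and `ξ ∈ ℝ^{ℕ^n_{2d}}` with `‖ξ‖ ≤ 1/2`, the function
`c(x) = ‖[x]_d‖² + ξᵀ[x]_{2d}` satisfies `c(x) ≥ (1 + ‖x‖²)/2`; in particular it is
coercive (all sublevel sets are bounded), and `c` attains its minimum over every
nonempty closed set `K ⊆ ℝⁿ`. -/
theorem perturbed_objective_coercive {n d : ℕ} (hd : 1 ≤ d)
    (ξ : (Fin n →₀ ℕ) → ℝ)
    (hξ : Real.sqrt (∑ α ∈ degLE n (2 * d), (ξ α) ^ 2) ≤ 1 / 2)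
    (c : (Fin n → ℝ) → ℝ)
    (hc : ∀ x, c x = (∑ β ∈ degLE n d, monoEval x β ^ 2) +
                      ∑ α ∈ degLE n (2 * d), ξ α * monoEval x α) :
    (∀ x : Fin n → ℝ, (1 + ∑ i, x i ^ 2) / 2 ≤ c x) ∧
    (∀ M : ℝ, Bornology.IsBounded {x : Fin n → ℝ | c x ≤ M}) ∧
    (∀ K : Set (Fin n → ℝ), K.Nonempty → IsClosed K →
      ∃ xstar ∈ K, ∀ z ∈ K, c xstar ≤ c z) := by
  have h1 : ∀ x : Fin n → ℝ, (1 + ∑ i, x i ^ 2) / 2 ≤ c x := by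
    intro x
    rw [hc x]
    set S := ∑ β ∈ degLE n d, monoEval x β ^ 2 with hSdef
    have hS1 : 1 + ∑ i, x i ^ 2 ≤ S := S_ge hd x
    have hS0 : (0:ℝ) ≤ S := by positivity
    have hQ : ∑ α ∈ degLE n (2 * d), monoEval x α ^ 2 ≤ S ^ 2 := Q_le_S_sq x
    have hCS := Real.sum_mul_le_sqrt_mul_sqrt (degLE n (2 * d))
      (fun α => -ξ α) (fun α => monoEval x α)
    have hsq : Real.sqrt (∑ α ∈ degLE n (2 * d), monoEval x α ^ 2) ≤ S := by
      calc Real.sqrt (∑ α ∈ degLE n (2 * d), monoEval x α ^ 2)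
          ≤ Real.sqrt (S ^ 2) := Real.sqrt_le_sqrt hQ
        _ = S := by rw [Real.sqrt_sq hS0]
    have hP : -((1/2) * S) ≤ ∑ α ∈ degLE n (2 * d), ξ α * monoEval x α := by
      have hsqrt0 : (0:ℝ) ≤ Real.sqrt (∑ α ∈ degLE n (2 * d), monoEval x α ^ 2) :=
        Real.sqrt_nonneg _
      have h2 : Real.sqrt (∑ α ∈ degLE n (2 * d), (-ξ α) ^ 2) *
          Real.sqrt (∑ α ∈ degLE n (2 * d), monoEval x α ^ 2) ≤ (1/2) * S := by
        simp only [neg_sq]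
        have := mul_le_mul hξ hsq hsqrt0 (by norm_num)
        simpa using this
      have h3 : ∑ α ∈ degLE n (2 * d), (-ξ α) * monoEval x α ≤ (1/2) * S :=
        le_trans hCS h2
      have : -(∑ α ∈ degLE n (2 * d), ξ α * monoEval x α) ≤ (1/2) * S := by
        rw [← Finset.sum_neg_distrib]
        simpa [neg_mul] using h3
      linarith
    linarith
  have hmono : ∀ α : Fin n →₀ ℕ, Continuous fun x : Fin n → ℝ => monoEval x α := by
    intro α
    unfold monoEval
    exact continuous_finset_prod _ fun i _ => (continuous_apply i).pow _
  have hcont : Continuous c := by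
    have hce : c = fun x => (∑ β ∈ degLE n d, monoEval x β ^ 2) +
        ∑ α ∈ degLE n (2 * d), ξ α * monoEval x α := funext hc
    rw [hce]
    exact (continuous_finset_sum _ fun β _ => (hmono β).pow 2).add
      (continuous_finset_sum _ fun α _ => continuous_const.mul (hmono α))
  have h2 : ∀ M : ℝ, Bornology.IsBounded {x : Fin n → ℝ | c x ≤ M} := by
    intro M
    refine (Metric.isBounded_closedBall
      (x := (0 : Fin n → ℝ)) (r := Real.sqrt (max (2 * M - 1) 0))).subset ?_
    intro x hx
    simp only [Set.mem_setOf_eq] at hx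
    have h1x := h1 x
    have hsum : ∑ i, x i ^ 2 ≤ 2 * M - 1 := by linarith
    rw [Metric.mem_closedBall, dist_zero_right]
    rw [pi_norm_le_iff_of_nonneg (Real.sqrt_nonneg _)]
    intro i
    have hxi : x i ^ 2 ≤ max (2 * M - 1) 0 := by
      refine le_trans ?_ (le_max_left _ _)
      refine le_trans (Finset.single_le_sum (f := fun j => x j ^ 2)
        (fun j _ => sq_nonneg _) (Finset.mem_univ i)) hsum
    calc ‖x i‖ = |x i| := rfl
      _ ≤ Real.sqrt (max (2 * M - 1) 0) := Real.abs_le_sqrt hxi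
  refine ⟨h1, h2, ?_⟩
  intro K hne hcl
  obtain ⟨x0, hx0⟩ := hne
  set T : Set (Fin n → ℝ) := K ∩ {x | c x ≤ c x0} with hT
  have hTne : T.Nonempty := ⟨x0, Set.mem_inter hx0 (by simp)⟩
  have hTcl : IsClosed T := hcl.inter (isClosed_le hcont continuous_const)
  have hTbd : Bornology.IsBounded T := (h2 (c x0)).subset (Set.inter_subset_right)
  have hTcp : IsCompact T := Metric.isCompact_of_isClosed_isBounded hTcl hTbd
  obtain ⟨xstar, hxstar, hmin⟩ := hTcp.exists_isMinOn hTne hcont.continuousOn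
  refine ⟨xstar, hxstar.1, fun z hz => ?_⟩
  rcases le_or_gt (c z) (c x0) with h | h
  · exact hmin (Set.mem_inter hz h)
  · exact le_trans (hmin (Set.mem_inter hx0 (by simp))) h.le
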